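/- Let (V,b) be a finite-dimensional semi-Riemannian vector space and J a metric-b algebraic Jacobi curvature operator. Define G : V → L(V;V) by G(x) = 1_V − (1/3)J(x,x), and let U be the open set of x with G(x) invertible, with metric g on U given by g_x(u,v) = b(G(x)u,v). Then g is symmetric nondegenerate on U, g_0 = b, and the second derivative of g at 0 satisfies g''(0)(v,w)(y,z) = −(2/3)b(J(v,w)y,z) for all v,w,y,z ∈ V; in particular the second derivative of the metric components has the exchange symmetry g_{αβ,γλ}(0) = g_{γλ,αβ}(0). -/

import Mathlib

open ContinuousLinearMap in
lemma osc_aux {V : Type*} [NormedAddCommGroup V] [NormedSpace ℝ V] [FiniteDimensional ℝ V]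
    (B : V →ₗ[ℝ] V →ₗ[ℝ] ℝ) (c : ℝ) (v w : V) :
    iteratedFDeriv ℝ 2 (fun x : V => c - (1 / 3 : ℝ) * B x x) 0 ![v, w]
      = -(1 / 3 : ℝ) * (B v w + B w v) := by
  set Bc : V →L[ℝ] V →L[ℝ] ℝ :=
    LinearMap.toContinuousLinearMap
      ((LinearMap.toContinuousLinearMap :
          (V →ₗ[ℝ] ℝ) ≃ₗ[ℝ] (V →L[ℝ] ℝ)).toLinearMap ∘ₗ B) with hBc
  have hBc_apply : ∀ u v : V, Bc u v = B u v := by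
    intro u v; simp [hBc]
  set F : V →L[ℝ] (V →L[ℝ] ℝ) := (-(1 / 3 : ℝ)) • (Bc + Bc.flip) with hFdef
  have hf : (fun x : V => c - (1 / 3 : ℝ) * B x x)
      = fun x : V => c + (-(1 / 3 : ℝ)) * Bc x x := by
    funext x; rw [hBc_apply]; ring
  have hF : ∀ x : V, HasFDerivAt (fun x : V => c + (-(1 / 3 : ℝ)) * Bc x x) (F x) x := by
    intro x
    have h1 : HasFDerivAt (fun x : V => Bc x x)
        (Bc.precompR V x (ContinuousLinearMap.id ℝ V)
          + Bc.precompL V (ContinuousLinearMap.id ℝ V) x) x :=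
      Bc.hasFDerivAt_of_bilinear (hasFDerivAt_id x) (hasFDerivAt_id x)
    have h2 := (h1.const_mul (-(1 / 3 : ℝ))).const_add c
    convert h2 using 1
    all_goals rfl
  rw [hf, iteratedFDeriv_two_apply]
  have hfd : (fderiv ℝ fun x : V => c + (-(1 / 3 : ℝ)) * Bc x x) = ⇑F :=
    funext fun x => (hF x).fderiv
  rw [hfd, ContinuousLinearMap.fderiv]
  simp [hFdef, hBc_apply]
  ring

/-- Let `(V,b)` be a finite-dimensional semi-Riemannian vector space and `J` a metric-`b`
algebraic Jacobi curvature operator.  With `G(x) = 1_V − (1/3)J(x,x)` and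
`U = {x | G(x) invertible}`, the bilinear form `g_x(u,v) = b(G(x)u,v)` is symmetric and
nondegenerate for `x ∈ U` (which is open and contains `0`), `g₀ = b`, and the second
derivative of `g` at `0` is `g''(0)(v,w)(y,z) = −(2/3)·b(J(v,w)y,z)`; in particular the
second derivatives of the metric have the exchange symmetry
`g''(0)(v,w)(y,z) = g''(0)(y,z)(v,w)`. -/
theorem osculating_metric_second_derivative
    {V : Type*} [NormedAddCommGroup V] [NormedSpace ℝ V] [FiniteDimensional ℝ V]
    (b : V →ₗ[ℝ] V →ₗ[ℝ] ℝ)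
    (hbsym : ∀ u v : V, b u v = b v u)
    (hbnd : ∀ u : V, (∀ v : V, b u v = 0) → u = 0)
    (J : V →ₗ[ℝ] V →ₗ[ℝ] V →ₗ[ℝ] V)
    (hJsym : ∀ u v : V, J u v = J v u)
    (hJcyc : ∀ u v w : V, J u v w + J v w u + J w u v = 0)
    (hJex : ∀ u v w x : V, b (J u v w) x = b (J w x u) v) :
    let G : V → (V →ₗ[ℝ] V) := fun x => LinearMap.id - ((1 : ℝ) / 3) • (J x x)
    IsOpen {x : V | IsUnit (G x)} ∧
      (0 : V) ∈ {x : V | IsUnit (G x)} ∧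
      (∀ x : V, IsUnit (G x) → ∀ u v : V, b (G x u) v = b (G x v) u) ∧
      (∀ x : V, IsUnit (G x) → ∀ u : V, (∀ v : V, b (G x u) v = 0) → u = 0) ∧
      (∀ u v : V, b (G 0 u) v = b u v) ∧
      (∀ v w y z : V,
        iteratedFDeriv ℝ 2 (fun x : V => b (G x y) z) 0 ![v, w]
          = -((2 : ℝ) / 3) * b (J v w y) z) ∧
      (∀ v w y z : V,
        iteratedFDeriv ℝ 2 (fun x : V => b (G x y) z) 0 ![v, w]
          = iteratedFDeriv ℝ 2 (fun x : V => b (G x v) w) 0 ![y, z]) := by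
  intro G
  have hGapp : ∀ x u : V, G x u = u - ((1:ℝ)/3) • J x x u := by
    intro x u; simp [G]
  have hGb : ∀ x u v2 : V, b (G x u) v2 = b u v2 - ((1:ℝ)/3) * b (J x x u) v2 := by
    intro x u v2
    rw [hGapp]
    simp [map_sub, map_smul, smul_eq_mul]
  -- the key second derivative computation
  have key : ∀ v w y z : V,
      iteratedFDeriv ℝ 2 (fun x : V => b (G x y) z) 0 ![v, w]
        = -((2 : ℝ) / 3) * b (J v w y) z := by
    intro v w y z
    set B : V →ₗ[ℝ] V →ₗ[ℝ] ℝ :=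
      LinearMap.mk₂ ℝ (fun u v2 : V => b (J u v2 y) z)
        (by intro u u' v2; simp) (by intro a u v2; simp)
        (by intro u v2 v2'; simp) (by intro a u v2; simp) with hB
    have hfun : (fun x : V => b (G x y) z)
        = fun x : V => b y z - (1 / 3 : ℝ) * B x x := by
      funext x
      rw [hGb]
      simp [hB]
    rw [hfun, osc_aux]
    have : B w v = B v w := by simp [hB, hJsym v w]
    rw [this, hB]
    simp
    ring
  refine ⟨?_, ?_, ?_, ?_, ?_, key, ?_⟩
  · -- openness
    set K : V →ₗ[ℝ] V →ₗ[ℝ] (V →L[ℝ] V) :=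
      { toFun := fun u =>
          (LinearMap.toContinuousLinearMap :
            (V →ₗ[ℝ] V) ≃ₗ[ℝ] (V →L[ℝ] V)).toLinearMap ∘ₗ (J u)
        map_add' := by intro u u'; ext v2 w; simp
        map_smul' := by intro a u; ext v2 w; simp } with hK
    set Kc : V →L[ℝ] V →L[ℝ] (V →L[ℝ] V) :=
      LinearMap.toContinuousLinearMap
        ((LinearMap.toContinuousLinearMap :
            (V →ₗ[ℝ] (V →L[ℝ] V)) ≃ₗ[ℝ] (V →L[ℝ] (V →L[ℝ] V))).toLinearMap ∘ₗ K) with hKc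
    have hKc_apply : ∀ x u : V, Kc x x u = J x x u := by
      intro x u; simp [hKc, hK]
    set Φ : V → (V →L[ℝ] V) := fun x => 1 - ((1:ℝ)/3) • (Kc x x) with hΦ
    have hΦcont : Continuous Φ := by
      apply continuous_const.sub
      exact (Kc.continuous₂.comp (continuous_id.prodMk continuous_id)).const_smul ((1:ℝ)/3)
    have hΦG : ∀ x : V, (Φ x : V → V) = G x := by
      intro x; funext u
      simp [hΦ, hGapp, hKc_apply]
    have hiff : ∀ x : V, IsUnit (G x) ↔ IsUnit (Φ x) := by
      intro x
      constructor
      · rintro ⟨⟨f, fi, hfi1, hfi2⟩, hf⟩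
        refine isUnit_iff_exists.2 ⟨LinearMap.toContinuousLinearMap fi, ?_, ?_⟩ <;>
        · ext u
          simp only [ContinuousLinearMap.mul_apply, ContinuousLinearMap.one_apply,
            LinearMap.coe_toContinuousLinearMap']
          have := congrArg (fun (g : V →ₗ[ℝ] V) => g u) hfi1
          have := congrArg (fun (g : V →ₗ[ℝ] V) => g u) hfi2
          simp only [Module.End.mul_apply, Module.End.one_apply] at *
          first
          | (show Φ x (fi u) = u; rw [show (Φ x) (fi u) = G x (fi u) from congrFun (hΦG x) _, ← hf]; assumption)
          | (show fi (Φ x u) = u; rw [show (Φ x) u = G x u from congrFun (hΦG x) _, ← hf]; assumption)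
      · rintro ⟨⟨f, fi, hfi1, hfi2⟩, hf⟩
        refine isUnit_iff_exists.2 ⟨(fi : V →L[ℝ] V).toLinearMap, ?_, ?_⟩ <;>
        · ext u
          simp only [Module.End.mul_apply, Module.End.one_apply, ContinuousLinearMap.coe_coe]
          have h1 := congrArg (fun (g : V →L[ℝ] V) => g u) hfi1
          have h2 := congrArg (fun (g : V →L[ℝ] V) => g u) hfi2
          simp only [ContinuousLinearMap.mul_apply, ContinuousLinearMap.one_apply] at h1 h2
          first
          | (show G x (fi u) = u; rw [← congrFun (hΦG x) (fi u), ← hf]; exact h1)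
          | (show fi (G x u) = u; rw [← congrFun (hΦG x) u, ← hf]; exact h2)
    have : {x : V | IsUnit (G x)} = Φ ⁻¹' {f : V →L[ℝ] V | IsUnit f} := by
      ext x; exact hiff x
    rw [this]
    exact Units.isOpen.preimage hΦcont
  · -- 0 ∈ U
    have : G 0 = LinearMap.id := by
      ext u; simp [hGapp]
    rw [Set.mem_setOf_eq, this, ← Module.End.one_eq_id]
    exact isUnit_one
  · -- symmetry
    intro x _ u v2
    rw [hGb, hGb]
    have h1 : b (J x x u) v2 = b (J u v2 x) x := hJex x x u v2
    have h2 : b (J x x v2) u = b (J v2 u x) x := hJex x x v2 u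
    rw [h1, h2, hJsym v2 u, hbsym u v2]
  · -- nondegenerate
    intro x hx u hu
    have hGu : G x u = 0 := hbnd _ hu
    rcases hx with ⟨⟨f, fi, hfi1, hfi2⟩, hf⟩
    have := congrArg (fun (g : V →ₗ[ℝ] V) => g u) hfi2
    simp only [Module.End.mul_apply, Module.End.one_apply] at this
    have hf' : f = G x := hf
    rw [hf', hGu, map_zero] at this
    exact this.symm
  · -- g 0 = b
    intro u v2
    rw [hGb]
    simp
  · -- exchange symmetry
    intro v w y z
    rw [key v w y z, key y z v w, hJex]
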